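/- Let Y be a real-valued random variable with |Y| ≤ B almost surely and let W_A, W_Ā, Y⁻ be random vectors with values in finite-dimensional Euclidean spaces on a common probability space. Then the expected squared gap between the full and reduced regression functions is bounded by the conditional mutual information: E[ ( E[Y ∣ W_A, W_Ā, Y⁻] − E[Y ∣ W_Ā, Y⁻] )² ] ≤ 2B² · I(Y; W_A ∣ W_Ā, Y⁻). -/

import Mathlib

open MeasureTheory ProbabilityTheory
open scoped ENNReal NNReal

/-- Kullback–Leibler divergence between two measures (`∞` if `μ` is not absolutely
continuous w.r.t. `ν` or the log-likelihood ratio is not `μ`-integrable). -/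
noncomputable def klDiv {α : Type*} [MeasurableSpace α] (μ ν : Measure α) : ℝ≥0∞ :=
  open scoped Classical in
  if μ ≪ ν ∧ Integrable (llr μ ν) μ then ENNReal.ofReal (∫ x, llr μ ν x ∂μ) else ∞

/-- Conditional mutual information `I(U; V ∣ Z)`: the expectation, over `(V, Z)`, of the
KL divergence between the regular conditional law of `U` given `(V, Z)` and the regular
conditional law of `U` given `Z`. -/
noncomputable def cmi {Ω α β γ : Type*} [MeasurableSpace Ω]
    [MeasurableSpace α] [StandardBorelSpace α] [Nonempty α]
    [MeasurableSpace β] [MeasurableSpace γ]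
    (μ : Measure Ω) [IsFiniteMeasure μ] (U : Ω → α) (V : Ω → β) (Z : Ω → γ) : ℝ≥0∞ :=
  ∫⁻ ω, klDiv (condDistrib U (fun ω' => (V ω', Z ω')) μ (V ω, Z ω)) (condDistrib U Z μ (Z ω)) ∂μ

section Scalar
open Real

open Real

private noncomputable def ufun (x : ℝ) : ℝ := (x + 1) * Real.log x - 2 * (x - 1)

private lemma ufun_hasDeriv {x : ℝ} (hx : 0 < x) :
    HasDerivAt ufun (Real.log x + x⁻¹ - 1) x := by
  have hx0 : x ≠ 0 := ne_of_gt hx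
  have h1 : HasDerivAt (fun x : ℝ => (x + 1) * Real.log x)
      (1 * Real.log x + (x + 1) * x⁻¹) x :=
    (((hasDerivAt_id x).add_const 1).mul (Real.hasDerivAt_log hx0))
  have h2 : HasDerivAt (fun x : ℝ => 2 * (x - 1)) 2 x := by
    simpa using ((hasDerivAt_id x).sub_const 1).const_mul 2
  have h3 := h1.sub h2
  have : 1 * Real.log x + (x + 1) * x⁻¹ - 2 = Real.log x + x⁻¹ - 1 := by
    field_simp; ring
  rw [this] at h3
  exact h3

private lemma ufun_mono : MonotoneOn ufun (Set.Ioi 0) := by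
  have hint : interior (Set.Ioi (0:ℝ)) = Set.Ioi 0 := interior_Ioi
  apply monotoneOn_of_deriv_nonneg (convex_Ioi 0)
  · intro x hx
    exact (ufun_hasDeriv hx).continuousAt.continuousWithinAt
  · rw [hint]; intro x hx
    exact (ufun_hasDeriv hx).differentiableAt.differentiableWithinAt
  · rw [hint]; intro x hx
    rw [(ufun_hasDeriv hx).deriv]
    have := Real.one_sub_inv_le_log_of_pos hx
    linarith

private lemma ufun_one : ufun 1 = 0 := by simp [ufun]

private noncomputable def psifun (x : ℝ) : ℝ :=
  (x + 2) * (x * Real.log x - x + 1) - (3/2) * (x - 1)^2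

private lemma psifun_hasDeriv {x : ℝ} (hx : 0 < x) :
    HasDerivAt psifun (2 * ufun x) x := by
  have hx0 : x ≠ 0 := ne_of_gt hx
  have hxl : HasDerivAt (fun x : ℝ => x * Real.log x) (Real.log x + 1) x := by
    have := (hasDerivAt_id x).mul (Real.hasDerivAt_log hx0)
    simpa [Pi.mul_def, mul_inv_cancel₀ hx0, add_comm] using this
  have h1 : HasDerivAt (fun x : ℝ => x * Real.log x - x + 1) (Real.log x + 1 - 1) x :=
    (hxl.sub (hasDerivAt_id x)).add_const 1
  have h2 : HasDerivAt (fun x : ℝ => x + 2) 1 x := (hasDerivAt_id x).add_const 2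
  have h3 : HasDerivAt (fun x : ℝ => (x + 2) * (x * Real.log x - x + 1))
      (1 * (x * Real.log x - x + 1) + (x + 2) * (Real.log x + 1 - 1)) x := h2.mul h1
  have h4 : HasDerivAt (fun x : ℝ => (3/2 : ℝ) * (x - 1)^2) ((3/2) * (2 * (x-1))) x := by
    have : HasDerivAt (fun x : ℝ => (x - 1)^2) (2 * (x - 1)) x := by
      simpa [Pi.pow_def] using ((hasDerivAt_id x).sub_const 1).pow 2
    exact this.const_mul (3/2)
  have h5 := h3.sub h4
  have : 1 * (x * Real.log x - x + 1) + (x + 2) * (Real.log x + 1 - 1) - (3/2) * (2 * (x-1))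
      = 2 * ufun x := by
    simp only [ufun]; ring
  rw [this] at h5
  exact h5

private lemma psifun_nonneg {x : ℝ} (hx : 0 ≤ x) : 0 ≤ psifun x := by
  have hcont : Continuous psifun := by
    unfold psifun
    exact (continuous_id.add continuous_const).mul
      ((Real.continuous_mul_log.sub continuous_id).add continuous_const) |>.sub
      (continuous_const.mul ((continuous_id.sub continuous_const).pow 2))
  have hone : psifun 1 = 0 := by simp [psifun]
  rcases le_or_gt 1 x with h1 | h1
  · -- monotone on Ici 1
    have hm : MonotoneOn psifun (Set.Ici 1) := by
      apply monotoneOn_of_deriv_nonneg (convex_Ici 1) hcont.continuousOn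
      · rw [interior_Ici]; intro y hy
        exact (psifun_hasDeriv (lt_trans one_pos hy)).differentiableAt.differentiableWithinAt
      · rw [interior_Ici]; intro y hy
        rw [(psifun_hasDeriv (lt_trans one_pos hy)).deriv]
        have : (0:ℝ) ≤ ufun y := by
          rw [← ufun_one]
          exact ufun_mono (Set.mem_Ioi.mpr one_pos) (Set.mem_Ioi.mpr (lt_trans one_pos hy))
            (le_of_lt hy)
        linarith
    have := hm (Set.mem_Ici.mpr le_rfl) (Set.mem_Ici.mpr h1) h1
    rw [hone] at this; exact this
  · -- antitone on Icc 0 1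
    have hm : AntitoneOn psifun (Set.Icc 0 1) := by
      apply antitoneOn_of_deriv_nonpos (convex_Icc 0 1) hcont.continuousOn
      · rw [interior_Icc]; intro y hy
        exact (psifun_hasDeriv hy.1).differentiableAt.differentiableWithinAt
      · rw [interior_Icc]; intro y hy
        rw [(psifun_hasDeriv hy.1).deriv]
        have : ufun y ≤ 0 := by
          rw [← ufun_one]
          exact ufun_mono (Set.mem_Ioi.mpr hy.1) (Set.mem_Ioi.mpr one_pos) (le_of_lt hy.2)
        linarith
    have := hm (Set.mem_Icc.mpr ⟨hx, le_of_lt h1⟩) (Set.mem_Icc.mpr ⟨zero_le_one, le_rfl⟩)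
      (le_of_lt h1)
    rw [hone] at this; exact this

/-- The scalar inequality behind Pinsker: `(x-1)²/(x+2) ≤ (2/3)(x log x - x + 1)` for `x ≥ 0`. -/
lemma sq_div_le_mul_log {x : ℝ} (hx : 0 ≤ x) :
    (x - 1)^2 / (x + 2) ≤ (2/3) * (x * Real.log x - x + 1) := by
  rw [div_le_iff₀ (by linarith : (0:ℝ) < x + 2)]
  have := psifun_nonneg hx
  simp only [psifun] at this
  nlinarith


end Scalar

/-- Pinsker-type inequality for means of bounded measures. -/
lemma sq_sub_integral_le_klDiv (P Q : Measure ℝ) [IsProbabilityMeasure P] [IsProbabilityMeasure Q]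
    {B : ℝ} (hB : 0 ≤ B) (hPs : ∀ᵐ y ∂P, |y| ≤ B) (hQs : ∀ᵐ y ∂Q, |y| ≤ B) :
    ENNReal.ofReal ((∫ y, y ∂P - ∫ y, y ∂Q)^2) ≤ ENNReal.ofReal (2 * B^2) * klDiv P Q := by
  by_cases hc : P ≪ Q ∧ Integrable (llr P Q) P
  swap
  · -- klDiv = ∞
    rw [klDiv, if_neg hc]
    rcases eq_or_lt_of_le hB with hB0 | hB0
    · -- B = 0 : both integrals are zero
      have hP0 : ∀ᵐ y ∂P, y = 0 := by
        filter_upwards [hPs] with y hy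
        rw [← hB0] at hy
        exact abs_eq_zero.mp (le_antisymm hy (abs_nonneg _))
      have hQ0 : ∀ᵐ y ∂Q, y = 0 := by
        filter_upwards [hQs] with y hy
        rw [← hB0] at hy
        exact abs_eq_zero.mp (le_antisymm hy (abs_nonneg _))
      have h1 : ∫ y, y ∂P = 0 := by
        rw [integral_congr_ae (g := fun _ => (0:ℝ)) hP0, integral_zero]
      have h2 : ∫ y, y ∂Q = 0 := by
        rw [integral_congr_ae (g := fun _ => (0:ℝ)) hQ0, integral_zero]
      simp [h1, h2]
    · have : ENNReal.ofReal (2 * B^2) ≠ 0 := by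
        simp only [ne_eq, ENNReal.ofReal_eq_zero, not_le]
        positivity
      rw [ENNReal.mul_top this]
      exact le_top
  obtain ⟨hac, hint⟩ := hc
  rw [klDiv, if_pos ⟨hac, hint⟩]
  set f : ℝ → ℝ := fun y => (P.rnDeriv Q y).toReal with hf_def
  have hf_meas : Measurable f := (Measure.measurable_rnDeriv P Q).ennreal_toReal
  have hf_nonneg : ∀ y, 0 ≤ f y := fun y => ENNReal.toReal_nonneg
  have hf_int : Integrable f Q := Measure.integrable_toReal_rnDeriv
  have hf_int1 : ∫ y, f y ∂Q = 1 := by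
    rw [Measure.integral_toReal_rnDeriv hac]; simp
  -- f·log f is integrable w.r.t. Q and its integral equals ∫ llr dP
  have hsmul : ∀ (g : ℝ → ℝ), (fun y => f y • g y) = fun y => f y * g y := fun g => rfl
  have hflogf_int : Integrable (fun y => f y * Real.log (f y)) Q := by
    have := (integrable_rnDeriv_smul_iff hac (f := llr P Q)).mpr hint
    simpa [llr_def, smul_eq_mul] using this
  have hKL : ∫ y, llr P Q y ∂P = ∫ y, f y * Real.log (f y) ∂Q := by
    rw [← integral_rnDeriv_smul hac (f := llr P Q)]
    simp [llr_def, smul_eq_mul]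
    rfl
  -- the weighted quadratic function D
  set D : ℝ → ℝ := fun y => (f y - 1)^2 / (f y + 2) with hD_def
  have hD_nonneg : ∀ y, 0 ≤ D y := fun y => div_nonneg (sq_nonneg _) (by linarith [hf_nonneg y])
  have hD_le_abs : ∀ y, D y ≤ |f y - 1| := by
    intro y
    rw [hD_def, div_le_iff₀ (by linarith [hf_nonneg y] : (0:ℝ) < f y + 2)]
    have h1 : |f y - 1| ≤ f y + 2 := by
      rcases abs_cases (f y - 1) with ⟨h, _⟩ | ⟨h, _⟩ <;> rw [h] <;> linarith [hf_nonneg y]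
    rw [← sq_abs (f y - 1), sq]
    exact mul_le_mul_of_nonneg_left h1 (abs_nonneg _)
  have habs_int : Integrable (fun y => |f y - 1|) Q := (hf_int.sub (integrable_const 1)).abs
  have hD_meas : Measurable D := ((hf_meas.sub measurable_const).pow_const 2).div
    (hf_meas.add measurable_const)
  have hD_int : Integrable D Q := by
    refine Integrable.mono' habs_int hD_meas.aestronglyMeasurable ?_
    filter_upwards with y
    rw [Real.norm_eq_abs, abs_of_nonneg (hD_nonneg y)]
    exact hD_le_abs y
  -- ∫ D ≤ (2/3) ∫ llr dP
  have hphi_int : Integrable (fun y => (2/3) * (f y * Real.log (f y) - f y + 1)) Q :=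
    (((hflogf_int.sub hf_int).add (integrable_const 1))).const_mul _
  have hD_le_KL : ∫ y, D y ∂Q ≤ (2/3) * ∫ y, llr P Q y ∂P := by
    calc ∫ y, D y ∂Q ≤ ∫ y, (2/3) * (f y * Real.log (f y) - f y + 1) ∂Q := by
          refine integral_mono hD_int hphi_int fun y => ?_
          exact sq_div_le_mul_log (hf_nonneg y)
    _ = (2/3) * (∫ y, f y * Real.log (f y) ∂Q - ∫ y, f y ∂Q + 1) := by
          have hsub : Integrable (fun y => f y * Real.log (f y) - f y) Q :=
            hflogf_int.sub hf_int
          rw [integral_const_mul, integral_add hsub (integrable_const 1),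
            integral_sub hflogf_int hf_int]
          simp
    _ = (2/3) * ∫ y, llr P Q y ∂P := by rw [hKL, hf_int1]; ring
  -- Cauchy–Schwarz: L² ≤ 3 ∫ D where L = ∫ |f - 1|
  set L : ℝ := ∫ y, |f y - 1| ∂Q with hL_def
  have hL_nonneg : 0 ≤ L := integral_nonneg fun y => abs_nonneg _
  have hDQ_nonneg : 0 ≤ ∫ y, D y ∂Q := integral_nonneg hD_nonneg
  have hCS : L^2 ≤ 3 * ∫ y, D y ∂Q := by
    set F : ℝ → ℝ≥0∞ := fun y => ENNReal.ofReal (|f y - 1| / Real.sqrt (f y + 2)) with hF_def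
    set G : ℝ → ℝ≥0∞ := fun y => ENNReal.ofReal (Real.sqrt (f y + 2)) with hG_def
    have hc_pos : ∀ y, (0:ℝ) < f y + 2 := fun y => by linarith [hf_nonneg y]
    have hrpow2 : ∀ a : ℝ, a ^ (2:ℝ) = a ^ (2:ℕ) := fun a => by
      rw [← Real.rpow_natCast a 2]; norm_num
    have hFG : ∀ y, F y * G y = ENNReal.ofReal (|f y - 1|) := by
      intro y
      have hs0 : Real.sqrt (f y + 2) ≠ 0 := by positivity
      simp only [hF_def, hG_def]
      rw [← ENNReal.ofReal_mul (by positivity), div_mul_cancel₀ _ hs0]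
    have hF2 : ∀ y, F y ^ (2:ℝ) = ENNReal.ofReal (D y) := by
      intro y
      simp only [hF_def]
      rw [ENNReal.ofReal_rpow_of_nonneg (by positivity) (by norm_num), hrpow2]
      congr 1
      rw [div_pow, sq_abs, Real.sq_sqrt (hc_pos y).le]
    have hG2 : ∀ y, G y ^ (2:ℝ) = ENNReal.ofReal (f y + 2) := by
      intro y
      simp only [hG_def]
      rw [ENNReal.ofReal_rpow_of_nonneg (Real.sqrt_nonneg _) (by norm_num), hrpow2,
        Real.sq_sqrt (hc_pos y).le]
    have hconj : Real.HolderConjugate 2 2 := Real.HolderConjugate.two_two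
    have hFmeas : AEMeasurable F Q :=
      ((hf_meas.sub measurable_const).abs.div
        ((hf_meas.add measurable_const).sqrt)).ennreal_ofReal.aemeasurable
    have hGmeas : AEMeasurable G Q :=
      ((hf_meas.add measurable_const).sqrt).ennreal_ofReal.aemeasurable
    have hHolder := ENNReal.lintegral_mul_le_Lp_mul_Lq Q hconj hFmeas hGmeas
    have h1 : ∫⁻ y, (F * G) y ∂Q = ENNReal.ofReal L := by
      simp only [Pi.mul_apply, hFG]
      rw [← ofReal_integral_eq_lintegral_ofReal habs_int
        (Filter.Eventually.of_forall fun y => abs_nonneg _)]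
    have h2 : ∫⁻ y, F y ^ (2:ℝ) ∂Q = ENNReal.ofReal (∫ y, D y ∂Q) := by
      simp only [hF2]
      rw [← ofReal_integral_eq_lintegral_ofReal hD_int
        (Filter.Eventually.of_forall hD_nonneg)]
    have h3 : ∫⁻ y, G y ^ (2:ℝ) ∂Q = ENNReal.ofReal 3 := by
      simp only [hG2]
      have hfc_int : Integrable (fun y => f y + 2) Q := hf_int.add (integrable_const 2)
      rw [← ofReal_integral_eq_lintegral_ofReal hfc_int
        (Filter.Eventually.of_forall fun y => by
          simp only [Pi.zero_apply]; linarith [hf_nonneg y])]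
      rw [integral_add hf_int (integrable_const 2), hf_int1]
      simp
      norm_num
    rw [h1, h2, h3] at hHolder
    have hDQ3 : (0:ℝ) ≤ (∫ y, D y ∂Q) ^ (1/2:ℝ) * 3 ^ (1/2:ℝ) := by
      have := Real.rpow_nonneg hDQ_nonneg (1/2:ℝ)
      have h3' : (0:ℝ) ≤ (3:ℝ) ^ (1/2:ℝ) := Real.rpow_nonneg (by norm_num) _
      positivity
    have hL : L ≤ (∫ y, D y ∂Q) ^ (1/2:ℝ) * 3 ^ (1/2:ℝ) := by
      rw [← ENNReal.ofReal_le_ofReal_iff hDQ3]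
      calc ENNReal.ofReal L
          ≤ (ENNReal.ofReal (∫ y, D y ∂Q)) ^ (1/2:ℝ) * (ENNReal.ofReal 3) ^ (1/2:ℝ) := hHolder
      _ = ENNReal.ofReal ((∫ y, D y ∂Q) ^ (1/2:ℝ) * 3 ^ (1/2:ℝ)) := by
          rw [ENNReal.ofReal_rpow_of_nonneg hDQ_nonneg (by norm_num),
            ENNReal.ofReal_rpow_of_nonneg (by norm_num) (by norm_num),
            ENNReal.ofReal_mul (Real.rpow_nonneg hDQ_nonneg _)]
    have hsq : ∀ x : ℝ, 0 ≤ x → ((x ^ (1/2:ℝ)) : ℝ)^2 = x := by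
      intro x hx
      rw [← Real.rpow_natCast (x ^ (1/2:ℝ)) 2, ← Real.rpow_mul hx]
      norm_num
    calc L^2 ≤ ((∫ y, D y ∂Q) ^ (1/2:ℝ) * 3 ^ (1/2:ℝ))^2 :=
          pow_le_pow_left₀ hL_nonneg hL 2
    _ = (∫ y, D y ∂Q) * 3 := by
        rw [mul_pow, hsq _ hDQ_nonneg, hsq 3 (by norm_num)]
    _ = 3 * ∫ y, D y ∂Q := mul_comm _ _
  -- mean gap ≤ B * L
  have hid_int : Integrable (fun y => y) Q := by
    refine Integrable.mono' (integrable_const B) measurable_id.aestronglyMeasurable ?_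
    filter_upwards [hQs] with y hy using by rwa [Real.norm_eq_abs]
  have hfy_int : Integrable (fun y => f y * y) Q := by
    refine Integrable.mono' (hf_int.const_mul B) (hf_meas.mul measurable_id).aestronglyMeasurable ?_
    filter_upwards [hQs] with y hy
    rw [Real.norm_eq_abs, abs_mul, abs_of_nonneg (hf_nonneg y)]
    calc f y * |y| ≤ f y * B := mul_le_mul_of_nonneg_left hy (hf_nonneg y)
    _ = B * f y := mul_comm _ _
  have hmeanP : ∫ y, y ∂P = ∫ y, f y * y ∂Q := by
    rw [← integral_rnDeriv_smul hac (f := fun y => y)]; rfl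
  have hgap : |∫ y, y ∂P - ∫ y, y ∂Q| ≤ B * L := by
    rw [hmeanP, ← integral_sub hfy_int hid_int]
    calc |∫ y, (f y * y - y) ∂Q| ≤ ∫ y, |f y * y - y| ∂Q := by
          simpa [Real.norm_eq_abs] using
            norm_integral_le_integral_norm (fun y => f y * y - y) (μ := Q)
    _ ≤ ∫ y, B * |f y - 1| ∂Q := by
          refine integral_mono_ae (hfy_int.sub hid_int).abs (habs_int.const_mul B) ?_
          filter_upwards [hQs] with y hy
          have : f y * y - y = (f y - 1) * y := by ring
          rw [this, abs_mul]
          calc |f y - 1| * |y| ≤ |f y - 1| * B := mul_le_mul_of_nonneg_left hy (abs_nonneg _)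
          _ = B * |f y - 1| := mul_comm _ _
    _ = B * L := by rw [integral_const_mul]
  -- combine
  have hfinal : (∫ y, y ∂P - ∫ y, y ∂Q)^2 ≤ 2 * B^2 * ∫ y, llr P Q y ∂P := by
    have h1 : (∫ y, y ∂P - ∫ y, y ∂Q)^2 ≤ (B * L)^2 := by
      rw [← sq_abs]
      exact pow_le_pow_left₀ (abs_nonneg _) hgap 2
    calc (∫ y, y ∂P - ∫ y, y ∂Q)^2 ≤ (B * L)^2 := h1
    _ = B^2 * L^2 := by ring
    _ ≤ B^2 * (3 * ∫ y, D y ∂Q) := mul_le_mul_of_nonneg_left hCS (sq_nonneg B)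
    _ ≤ B^2 * (3 * ((2/3) * ∫ y, llr P Q y ∂P)) := by
        have := mul_le_mul_of_nonneg_left hD_le_KL (by norm_num : (0:ℝ) ≤ 3)
        exact mul_le_mul_of_nonneg_left this (sq_nonneg B)
    _ = 2 * B^2 * ∫ y, llr P Q y ∂P := by ring
  calc ENNReal.ofReal ((∫ y, y ∂P - ∫ y, y ∂Q)^2)
      ≤ ENNReal.ofReal (2 * B^2 * ∫ y, llr P Q y ∂P) := ENNReal.ofReal_le_ofReal hfinal
  _ = ENNReal.ofReal (2 * B^2) * ENNReal.ofReal (∫ y, llr P Q y ∂P) := by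
      rw [ENNReal.ofReal_mul (by positivity)]

lemma ae_ae_condDistrib_mem {Ω β : Type*} [MeasurableSpace Ω] {mβ : MeasurableSpace β}
    (μ : Measure Ω) [IsFiniteMeasure μ] {X : Ω → β} {Y : Ω → ℝ}
    (hX : Measurable X) (hY : Measurable Y) {s : Set ℝ} (hs : MeasurableSet s)
    (h : ∀ᵐ ω ∂μ, Y ω ∈ s) :
    ∀ᵐ ω ∂μ, ∀ᵐ y ∂(condDistrib Y X μ (X ω)), y ∈ s := by
  set ρ : Measure (β × ℝ) := μ.map (fun ω => (X ω, Y ω)) with hρ_def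
  haveI : IsFiniteMeasure ρ := Measure.isFiniteMeasure_map μ _
  have hρ : ∀ᵐ z ∂ρ, z.2 ∈ s := by
    rw [hρ_def, ae_map_iff (hX.prodMk hY).aemeasurable (measurable_snd hs)]
    exact h
  have hd : ρ.fst ⊗ₘ ρ.condKernel = ρ := by rw [Measure.disintegrate]
  rw [← hd] at hρ
  have h2 := Measure.ae_ae_of_ae_compProd hρ
  rw [Measure.fst_map_prodMk hY] at h2
  have h3 := ae_of_ae_map hX.aemeasurable h2
  rw [condDistrib]
  exact h3


/-- The expected squared gap between the full and the reduced regression functions is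
bounded by `2B²` times the conditional mutual information `I(Y; W_A ∣ W_Ā, Y⁻)`. -/
theorem sq_gap_regression_functions_le
    {Ω : Type*} [MeasurableSpace Ω] (μ : Measure Ω) [IsProbabilityMeasure μ]
    {dA dAb dY : ℕ}
    (Y : Ω → ℝ) (WA : Ω → (Fin dA → ℝ)) (WAb : Ω → (Fin dAb → ℝ)) (Ym : Ω → (Fin dY → ℝ))
    (hY : Measurable Y) (hWA : Measurable WA) (hWAb : Measurable WAb) (hYm : Measurable Ym)
    (B : ℝ) (hB : ∀ᵐ ω ∂μ, |Y ω| ≤ B) :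
    ENNReal.ofReal (∫ ω,
        ((μ[Y | MeasurableSpace.comap (fun ω' => (WA ω', WAb ω', Ym ω')) inferInstance]) ω
          - (μ[Y | MeasurableSpace.comap (fun ω' => (WAb ω', Ym ω')) inferInstance]) ω) ^ 2 ∂μ)
      ≤ ENNReal.ofReal (2 * B ^ 2) * cmi μ Y WA (fun ω => (WAb ω, Ym ω)) := by
  obtain ⟨ω₀, hω₀⟩ := hB.exists
  have hB0 : 0 ≤ B := le_trans (abs_nonneg _) hω₀
  set T : Ω → (Fin dA → ℝ) × ((Fin dAb → ℝ) × (Fin dY → ℝ)) :=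
    fun ω' => (WA ω', WAb ω', Ym ω') with hT_def
  set Z : Ω → (Fin dAb → ℝ) × (Fin dY → ℝ) := fun ω' => (WAb ω', Ym ω') with hZ_def
  have hT : Measurable T := hWA.prodMk (hWAb.prodMk hYm)
  have hZ : Measurable Z := hWAb.prodMk hYm
  have hYint : Integrable Y μ := by
    refine Integrable.mono' (integrable_const B) hY.aestronglyMeasurable ?_
    filter_upwards [hB] with ω h using by rwa [Real.norm_eq_abs]
  -- conditional expectations as means of conditional distributions
  have h1 : μ[Y | MeasurableSpace.comap T inferInstance]
      =ᵐ[μ] fun ω => ∫ y, y ∂condDistrib Y T μ (T ω) :=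
    condExp_ae_eq_integral_condDistrib' hT hYint
  have h2 : μ[Y | MeasurableSpace.comap Z inferInstance]
      =ᵐ[μ] fun ω => ∫ y, y ∂condDistrib Y Z μ (Z ω) :=
    condExp_ae_eq_integral_condDistrib' hZ hYint
  -- a.e. boundedness of the conditional distributions
  have hs : MeasurableSet {y : ℝ | |y| ≤ B} := measurableSet_le measurable_abs measurable_const
  have hPsupp := ae_ae_condDistrib_mem μ hT hY hs hB
  have hQsupp := ae_ae_condDistrib_mem μ hZ hY hs hB
  -- integrability of the squared gap
  set c1 : Ω → ℝ := μ[Y | MeasurableSpace.comap T inferInstance] with hc1_def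
  set c2 : Ω → ℝ := μ[Y | MeasurableSpace.comap Z inferInstance] with hc2_def
  have hc1_bdd : ∀ᵐ ω ∂μ, |c1 ω| ≤ ((⟨B, hB0⟩ : ℝ≥0) : ℝ) :=
    ae_bdd_condExp_of_ae_bdd (R := ⟨B, hB0⟩) hB
  have hc2_bdd : ∀ᵐ ω ∂μ, |c2 ω| ≤ ((⟨B, hB0⟩ : ℝ≥0) : ℝ) :=
    ae_bdd_condExp_of_ae_bdd (R := ⟨B, hB0⟩) hB
  have hgap_meas : AEStronglyMeasurable (fun ω => (c1 ω - c2 ω)^2) μ := by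
    have m1 : Measurable c1 := (stronglyMeasurable_condExp.mono hT.comap_le).measurable
    have m2 : Measurable c2 := (stronglyMeasurable_condExp.mono hZ.comap_le).measurable
    exact ((m1.sub m2).pow_const 2).aestronglyMeasurable
  have hgap_int : Integrable (fun ω => (c1 ω - c2 ω)^2) μ := by
    refine Integrable.mono' (integrable_const ((2*B)^2)) hgap_meas ?_
    filter_upwards [hc1_bdd, hc2_bdd] with ω e1 e2
    rw [Real.norm_eq_abs, abs_of_nonneg (sq_nonneg _), ← sq_abs]
    refine pow_le_pow_left₀ (abs_nonneg _) ?_ 2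
    calc |c1 ω - c2 ω| ≤ |c1 ω| + |c2 ω| := abs_sub _ _
    _ ≤ B + B := add_le_add e1 e2
    _ = 2 * B := by ring
  -- pointwise a.e. bound
  have hpt : ∀ᵐ ω ∂μ, ENNReal.ofReal ((c1 ω - c2 ω)^2)
      ≤ ENNReal.ofReal (2 * B^2) *
        klDiv (condDistrib Y T μ (T ω)) (condDistrib Y Z μ (Z ω)) := by
    filter_upwards [h1, h2, hPsupp, hQsupp] with ω e1 e2 sP sQ
    rw [e1, e2]
    exact sq_sub_integral_le_klDiv _ _ hB0 sP sQ
  -- put everything together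
  calc ENNReal.ofReal (∫ ω, (c1 ω - c2 ω)^2 ∂μ)
      = ∫⁻ ω, ENNReal.ofReal ((c1 ω - c2 ω)^2) ∂μ :=
        ofReal_integral_eq_lintegral_ofReal hgap_int
          (Filter.Eventually.of_forall fun ω => sq_nonneg _)
  _ ≤ ∫⁻ ω, ENNReal.ofReal (2 * B^2) *
        klDiv (condDistrib Y T μ (T ω)) (condDistrib Y Z μ (Z ω)) ∂μ :=
        lintegral_mono_ae hpt
  _ = ENNReal.ofReal (2 * B^2) * cmi μ Y WA (fun ω => (WAb ω, Ym ω)) := by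
        rw [lintegral_const_mul' _ _ ENNReal.ofReal_ne_top]
        rfl
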